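/- Let D, D' ⊆ Φ⁺ be rook placements. Then Ω_D = Ω_{D'} if and only if D = D'. -/
import Mathlib


/-- The set of positive roots of `A_{n-1}`, encoded as pairs `(i,j)` with `1 ≤ j < i ≤ n`. -/
def PhiPos (n : ℕ) : Finset (ℕ × ℕ) :=
  (Finset.Icc 1 n ×ˢ Finset.Icc 1 n).filter (fun p => p.2 < p.1)

/-- `D` is a rook placement: a subset of `Φ⁺` whose distinct elements never share
a row or a column. -/
def IsRP (n : ℕ) (D : Finset (ℕ × ℕ)) : Prop :=
  D ⊆ PhiPos n ∧ ∀ p ∈ D, ∀ q ∈ D, p ≠ q → p.1 ≠ q.1 ∧ p.2 ≠ q.2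
/-- Strictly lower-triangular part of a matrix. -/
def lowPart {n : ℕ} (X : Matrix (Fin n) (Fin n) ℂ) : Matrix (Fin n) (Fin n) ℂ :=
  Matrix.of fun i j => if (j : ℕ) < (i : ℕ) then X i j else 0

/-- Upper-triangular matrix (an element of `B` must moreover be invertible). -/
def IsUpperTri {n : ℕ} (b : Matrix (Fin n) (Fin n) ℂ) : Prop :=
  ∀ i j : Fin n, (j : ℕ) < (i : ℕ) → b i j = 0

/-- Upper unitriangular matrix, i.e. an element of `U`. -/
def IsUnitri {n : ℕ} (u : Matrix (Fin n) (Fin n) ℂ) : Prop :=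
  IsUpperTri u ∧ ∀ i, u i i = 1

/-- The matrix `f_D` of a rook placement: entry `1` at the (1-based) positions in `D`. -/
def fD (n : ℕ) (D : Finset (ℕ × ℕ)) : Matrix (Fin n) (Fin n) ℂ :=
  Matrix.of fun i j => if ((i : ℕ) + 1, (j : ℕ) + 1) ∈ D then 1 else 0

/-- The matrix `f_{D,ξ}`: entry `ξ(i,j)` at the (1-based) positions `(i,j) ∈ D`. -/
def fDxi (n : ℕ) (D : Finset (ℕ × ℕ)) (ξ : ℕ × ℕ → ℂ) : Matrix (Fin n) (Fin n) ℂ :=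
  Matrix.of fun i j =>
    if ((i : ℕ) + 1, (j : ℕ) + 1) ∈ D then ξ ((i : ℕ) + 1, (j : ℕ) + 1) else 0

/-- The coadjoint action `b.λ = (b λ b⁻¹)_low`. -/
noncomputable def coact {n : ℕ} (b l : Matrix (Fin n) (Fin n) ℂ) :
    Matrix (Fin n) (Fin n) ℂ := lowPart (b * l * b⁻¹)

/-- The `B`-orbit `Ω_D = B.f_D`. -/
noncomputable def Omega (n : ℕ) (D : Finset (ℕ × ℕ)) : Set (Matrix (Fin n) (Fin n) ℂ) :=
  {l | ∃ b, IsUnit b ∧ IsUpperTri b ∧ l = coact b (fD n D)}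

/-- The `U`-orbit `Θ_{D,ξ} = U.f_{D,ξ}`. -/
noncomputable def Theta (n : ℕ) (D : Finset (ℕ × ℕ)) (ξ : ℕ × ℕ → ℂ) :
    Set (Matrix (Fin n) (Fin n) ℂ) :=
  {l | ∃ u, IsUnitri u ∧ l = coact u (fDxi n D ξ)}

namespace OmegaAux

variable {n : ℕ}

lemma upperTri_blockTri {M : Matrix (Fin n) (Fin n) ℂ} (h : IsUpperTri M) :
    M.BlockTriangular id := fun i j hij => h i j hij

lemma det_upperTri {M : Matrix (Fin n) (Fin n) ℂ} (h : IsUpperTri M) :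
    M.det = ∏ r, M r r := Matrix.det_of_upperTriangular (upperTri_blockTri h)

lemma diag_ne_zero {M : Matrix (Fin n) (Fin n) ℂ} (hu : IsUnit M) (h : IsUpperTri M) :
    ∀ r, M r r ≠ 0 := by
  have hd : IsUnit M.det := (Matrix.isUnit_iff_isUnit_det M).mp hu
  rw [det_upperTri h] at hd
  intro r
  exact Finset.prod_ne_zero_iff.mp hd.ne_zero r (Finset.mem_univ r)

lemma inv_upperTri {M : Matrix (Fin n) (Fin n) ℂ} (hu : IsUnit M) (h : IsUpperTri M) :
    IsUpperTri M⁻¹ := by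
  haveI := hu.invertible
  intro i j hij
  exact Matrix.blockTriangular_inv_of_blockTriangular (upperTri_blockTri h)
    (show (id j : Fin n) < id i from hij)

lemma isUnit_det_upperTri {M : Matrix (Fin n) (Fin n) ℂ} (h : IsUpperTri M)
    (hd : ∀ r, M r r ≠ 0) : IsUnit M.det := by
  rw [det_upperTri h]
  exact isUnit_iff_ne_zero.mpr (Finset.prod_ne_zero_iff.mpr fun r _ => hd r)

/-- Projection onto rows `r` with `i ≤ r+1`. -/
def Pmat (n i : ℕ) : Matrix (Fin n) (Fin n) ℂ :=
  Matrix.diagonal (fun r => if i ≤ (r : ℕ) + 1 then 1 else 0)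

/-- Projection onto columns `c` with `c+1 ≤ j`. -/
def Qmat (n j : ℕ) : Matrix (Fin n) (Fin n) ℂ :=
  Matrix.diagonal (fun c => if (c : ℕ) + 1 ≤ j then 1 else 0)

lemma corner_apply (i j : ℕ) (X : Matrix (Fin n) (Fin n) ℂ) (r c : Fin n) :
    (Pmat n i * X * Qmat n j) r c
      = if i ≤ (r : ℕ) + 1 ∧ (c : ℕ) + 1 ≤ j then X r c else 0 := by
  rw [Pmat, Qmat, Matrix.mul_diagonal, Matrix.diagonal_mul]
  split_ifs with h1 h2 h3 h4 h5 <;> simp_all <;> ring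

/-- Killing the strictly-upper part does not change the corner, if `j < i`. -/
lemma corner_lowPart (i j : ℕ) (hij : j < i) (X : Matrix (Fin n) (Fin n) ℂ) :
    Pmat n i * lowPart X * Qmat n j = Pmat n i * X * Qmat n j := by
  ext r c
  rw [corner_apply, corner_apply]
  split_ifs with h
  · have hcr : (c : ℕ) < (r : ℕ) := by omega
    simp only [lowPart, Matrix.of_apply, if_pos hcr]
  · rfl

/-- Extend the lower-right corner of `M` by the identity. -/
def ext1 (n i : ℕ) (M : Matrix (Fin n) (Fin n) ℂ) : Matrix (Fin n) (Fin n) ℂ :=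
  Matrix.of fun r c =>
    if i ≤ (r : ℕ) + 1 ∧ i ≤ (c : ℕ) + 1 then M r c else if r = c then 1 else 0

/-- Extend the upper-left corner of `M` by the identity. -/
def ext2 (n j : ℕ) (M : Matrix (Fin n) (Fin n) ℂ) : Matrix (Fin n) (Fin n) ℂ :=
  Matrix.of fun r c =>
    if (r : ℕ) + 1 ≤ j ∧ (c : ℕ) + 1 ≤ j then M r c else if r = c then 1 else 0

lemma ext1_upperTri {M : Matrix (Fin n) (Fin n) ℂ} (h : IsUpperTri M) (i : ℕ) :
    IsUpperTri (ext1 n i M) := by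
  intro r c hrc
  simp only [ext1, Matrix.of_apply]
  split_ifs with h1 h2
  · exact h r c hrc
  · exact absurd (h2 ▸ hrc) (lt_irrefl _)
  · rfl

lemma ext2_upperTri {M : Matrix (Fin n) (Fin n) ℂ} (h : IsUpperTri M) (j : ℕ) :
    IsUpperTri (ext2 n j M) := by
  intro r c hrc
  simp only [ext2, Matrix.of_apply]
  split_ifs with h1 h2
  · exact h r c hrc
  · exact absurd (h2 ▸ hrc) (lt_irrefl _)
  · rfl

lemma ext1_diag {M : Matrix (Fin n) (Fin n) ℂ} (hd : ∀ r, M r r ≠ 0) (i : ℕ) :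
    ∀ r, ext1 n i M r r ≠ 0 := by
  intro r
  simp only [ext1, Matrix.of_apply, if_pos rfl, and_self]
  split_ifs with h1
  · exact hd r
  · exact one_ne_zero

lemma ext2_diag {M : Matrix (Fin n) (Fin n) ℂ} (hd : ∀ r, M r r ≠ 0) (j : ℕ) :
    ∀ r, ext2 n j M r r ≠ 0 := by
  intro r
  simp only [ext2, Matrix.of_apply, if_pos rfl, and_self]
  split_ifs with h1
  · exact hd r
  · exact one_ne_zero

lemma Pmat_mul {M : Matrix (Fin n) (Fin n) ℂ} (h : IsUpperTri M) (i : ℕ) :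
    Pmat n i * M = ext1 n i M * Pmat n i := by
  ext r c
  rw [Pmat, Matrix.diagonal_mul, Matrix.mul_diagonal]
  simp only [ext1, Matrix.of_apply]
  by_cases hc : i ≤ (c : ℕ) + 1
  · by_cases hr : i ≤ (r : ℕ) + 1
    · simp [hr, hc]
    · have : (c : ℕ) < (r : ℕ) → M r c = 0 := h r c
      by_cases hrc : r = c
      · exact absurd (hrc ▸ hc) hr
      · simp [hr, hc, hrc]
  · by_cases hr : i ≤ (r : ℕ) + 1
    · have : M r c = 0 := h r c (by omega)
      simp [hr, hc, this]
    · simp [hr, hc]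

lemma mul_Qmat {M : Matrix (Fin n) (Fin n) ℂ} (h : IsUpperTri M) (j : ℕ) :
    M * Qmat n j = Qmat n j * ext2 n j M := by
  ext r c
  rw [Qmat, Matrix.mul_diagonal, Matrix.diagonal_mul]
  simp only [ext2, Matrix.of_apply]
  by_cases hr : (r : ℕ) + 1 ≤ j
  · by_cases hc : (c : ℕ) + 1 ≤ j
    · simp [hr, hc]
    · by_cases hrc : r = c
      · exact absurd (hrc ▸ hr) hc
      · simp [hr, hc, hrc]
  · by_cases hc : (c : ℕ) + 1 ≤ j
    · have : M r c = 0 := h r c (by omega)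
      simp [hr, hc, this]
    · simp [hr, hc]

/-- The corner rank is invariant under conjugation by an invertible upper
triangular matrix. -/
lemma rank_corner_conj (i j : ℕ) (b X : Matrix (Fin n) (Fin n) ℂ)
    (hb : IsUnit b) (hbu : IsUpperTri b) :
    (Pmat n i * (b * X * b⁻¹) * Qmat n j).rank = (Pmat n i * X * Qmat n j).rank := by
  have hbd : IsUnit b.det := (Matrix.isUnit_iff_isUnit_det b).mp hb
  have hbinv : IsUnit b⁻¹ := Matrix.isUnit_nonsing_inv_iff.mpr hb
  have hbinvU : IsUpperTri b⁻¹ := inv_upperTri hb hbu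
  have key : Pmat n i * (b * X * b⁻¹) * Qmat n j
      = ext1 n i b * (Pmat n i * X * Qmat n j) * ext2 n j b⁻¹ := by
    calc Pmat n i * (b * X * b⁻¹) * Qmat n j
        = (Pmat n i * b) * X * (b⁻¹ * Qmat n j) := by
          simp only [Matrix.mul_assoc]
      _ = (ext1 n i b * Pmat n i) * X * (Qmat n j * ext2 n j b⁻¹) := by
          rw [Pmat_mul hbu, mul_Qmat hbinvU]
      _ = ext1 n i b * (Pmat n i * X * Qmat n j) * ext2 n j b⁻¹ := by
          simp only [Matrix.mul_assoc]
  rw [key,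
    Matrix.rank_mul_eq_left_of_isUnit_det (ext2 n j b⁻¹) _
      (isUnit_det_upperTri (ext2_upperTri hbinvU j) (ext2_diag (diag_ne_zero hbinv hbinvU) j)),
    Matrix.rank_mul_eq_right_of_isUnit_det (ext1 n i b) _
      (isUnit_det_upperTri (ext1_upperTri hbu i) (ext1_diag (diag_ne_zero hb hbu) i))]

lemma mem_PhiPos {p : ℕ × ℕ} : p ∈ PhiPos n ↔
    1 ≤ p.1 ∧ p.1 ≤ n ∧ 1 ≤ p.2 ∧ p.2 ≤ n ∧ p.2 < p.1 := by
  simp only [PhiPos, Finset.mem_filter, Finset.mem_product, Finset.mem_Icc]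
  tauto

/-- The rank of the matrix of a rook placement is its cardinality. -/
lemma rank_fD {E : Finset (ℕ × ℕ)} (hE : IsRP n E) : (fD n E).rank = E.card := by
  classical
  set f := fD n E with hf
  set d : Fin n → ℂ := fun r => if ∃ c : Fin n, ((r : ℕ) + 1, (c : ℕ) + 1) ∈ E then 1 else 0
    with hdd
  have h1 : f * f.transpose = Matrix.diagonal d := by
    ext r s
    rw [Matrix.mul_apply]
    by_cases hrs : r = s
    · subst hrs
      have hterm : ∀ c : Fin n, f r c * f.transpose c r
          = if ((r : ℕ) + 1, (c : ℕ) + 1) ∈ E then (1 : ℂ) else 0 := by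
        intro c
        simp only [hf, fD, Matrix.transpose_apply, Matrix.of_apply]
        split_ifs <;> ring
      have hsum : ∑ c : Fin n, f r c * f.transpose c r
          = ∑ c : Fin n, if ((r : ℕ) + 1, (c : ℕ) + 1) ∈ E then (1 : ℂ) else 0 :=
        Finset.sum_congr rfl (fun c _ => hterm c)
      rw [hsum, Finset.sum_boole, Matrix.diagonal_apply_eq]
      by_cases hex : ∃ c : Fin n, ((r : ℕ) + 1, (c : ℕ) + 1) ∈ E
      · obtain ⟨c₀, hc₀⟩ := hex
        have hfil : Finset.filter (fun c : Fin n => ((r : ℕ) + 1, (c : ℕ) + 1) ∈ E)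
            Finset.univ = {c₀} := by
          ext c
          simp only [Finset.mem_filter, Finset.mem_univ, true_and, Finset.mem_singleton]
          constructor
          · intro hc
            by_contra hne
            have hpq : ((r : ℕ) + 1, (c : ℕ) + 1) ≠ ((r : ℕ) + 1, (c₀ : ℕ) + 1) := by
              intro heq
              have h2 := congrArg Prod.snd heq
              exact hne (Fin.ext (by omega))
            exact (hE.2 _ hc _ hc₀ hpq).1 rfl
          · rintro rfl; exact hc₀
        rw [hfil]
        simp only [Finset.card_singleton, Nat.cast_one, hdd]
        rw [if_pos ⟨c₀, hc₀⟩]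
      · have hfil : Finset.filter (fun c : Fin n => ((r : ℕ) + 1, (c : ℕ) + 1) ∈ E)
            Finset.univ = ∅ := by
          ext c
          simp only [Finset.mem_filter, Finset.mem_univ, true_and, Finset.notMem_empty,
            iff_false]
          exact fun hc => hex ⟨c, hc⟩
        rw [hfil]
        simp only [Finset.card_empty, Nat.cast_zero, hdd]
        rw [if_neg hex]
    · have hterm : ∀ c : Fin n, f r c * f.transpose c s = 0 := by
        intro c
        simp only [hf, fD, Matrix.transpose_apply, Matrix.of_apply]
        split_ifs with hm1 hm2
        · exfalso
          have hpq : ((r : ℕ) + 1, (c : ℕ) + 1) ≠ ((s : ℕ) + 1, (c : ℕ) + 1) := by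
            intro heq
            have h2 := congrArg Prod.fst heq
            exact hrs (Fin.ext (by omega))
          exact (hE.2 _ hm1 _ hm2 hpq).2 rfl
        all_goals ring
      rw [Matrix.diagonal_apply_ne _ hrs]
      exact Finset.sum_eq_zero (fun c _ => hterm c)
  have h2 : Matrix.diagonal d * f = f := by
    ext r c
    rw [Matrix.diagonal_mul]
    simp only [hf, fD, Matrix.of_apply, hdd]
    by_cases hm : ((r : ℕ) + 1, (c : ℕ) + 1) ∈ E
    · have hex : ∃ x : Fin n, ((r : ℕ) + 1, (x : ℕ) + 1) ∈ E := ⟨c, hm⟩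
      rw [if_pos hm, if_pos hex, one_mul]
    · rw [if_neg hm, mul_zero]
  have h3 : f.rank = (Matrix.diagonal d).rank := by
    apply le_antisymm
    · have : f = (f * f.transpose) * f := by rw [h1, h2]
      calc f.rank = ((f * f.transpose) * f).rank := by rw [← this]
        _ ≤ (f * f.transpose).rank := Matrix.rank_mul_le_left _ _
        _ = (Matrix.diagonal d).rank := by rw [h1]
    · calc (Matrix.diagonal d).rank = (f * f.transpose).rank := by rw [h1]
        _ ≤ f.rank := Matrix.rank_mul_le_left _ _
  rw [h3, Matrix.rank_diagonal]
  rw [Fintype.card_subtype]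
  symm
  apply Finset.card_bij (fun (p : ℕ × ℕ) (hp : p ∈ E) => (⟨p.1 - 1, by
    have := mem_PhiPos.mp (hE.1 hp); omega⟩ : Fin n))
  · intro p hp
    have hpp := mem_PhiPos.mp (hE.1 hp)
    have hd1 : ∀ r : Fin n, (∃ c : Fin n, ((r : ℕ) + 1, (c : ℕ) + 1) ∈ E) → d r ≠ 0 := by
      intro r hex
      simp only [hdd]
      rw [if_pos hex]
      exact one_ne_zero
    simp only [Finset.mem_filter, Finset.mem_univ, true_and]
    apply hd1
    refine ⟨⟨p.2 - 1, by omega⟩, ?_⟩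
    show (p.1 - 1 + 1, p.2 - 1 + 1) ∈ E
    have e1 : p.1 - 1 + 1 = p.1 := by omega
    have e2 : p.2 - 1 + 1 = p.2 := by omega
    rw [e1, e2, Prod.mk.eta]
    exact hp
  · intro p hp q hq hpq
    have hpp := mem_PhiPos.mp (hE.1 hp)
    have hqq := mem_PhiPos.mp (hE.1 hq)
    have hv : p.1 - 1 = q.1 - 1 := congrArg Fin.val hpq
    have h1 : p.1 = q.1 := by omega
    by_contra hne
    exact (hE.2 p hp q hq hne).1 h1
  · intro r hr
    simp only [Finset.mem_filter, Finset.mem_univ, true_and, hdd] at hr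
    have hex : ∃ c : Fin n, ((r : ℕ) + 1, (c : ℕ) + 1) ∈ E := by
      by_contra hc
      exact hr (if_neg hc)
    obtain ⟨c, hc⟩ := hex
    exact ⟨((r : ℕ) + 1, (c : ℕ) + 1), hc, Fin.ext (by simp)⟩

/-- The corner of `fD n D` is the matrix of the restricted rook placement. -/
lemma corner_fD (i j : ℕ) (D : Finset (ℕ × ℕ)) :
    Pmat n i * fD n D * Qmat n j
      = fD n (D.filter fun p => i ≤ p.1 ∧ p.2 ≤ j) := by
  ext r c
  rw [corner_apply]
  simp only [fD, Matrix.of_apply, Finset.mem_filter]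
  split_ifs with h1 h2 h3 h4 <;> first | rfl | (exfalso; tauto)

def Ncount (i j : ℕ) (X : Finset (ℕ × ℕ)) : ℕ :=
  (X.filter fun p => i ≤ p.1 ∧ p.2 ≤ j).card

lemma count_step (X : Finset (ℕ × ℕ)) (a b : ℕ) (hb : 1 ≤ b) :
    Ncount a b X + Ncount (a + 1) (b - 1) X
      = Ncount (a + 1) b X + Ncount a (b - 1) X + (if (a, b) ∈ X then 1 else 0) := by
  classical
  have hlast : (X.filter fun p => p = (a, b)).card = (if (a, b) ∈ X then 1 else 0) := by
    rw [Finset.filter_eq' X (a, b)]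
    split_ifs <;> simp
  simp only [Ncount, Finset.card_filter, ← hlast, ← Finset.sum_add_distrib]
  apply Finset.sum_congr rfl
  intro p _
  rcases p with ⟨x, y⟩
  simp only [Prod.mk.injEq]
  by_cases h1 : a ≤ x <;> by_cases h2 : y ≤ b <;> by_cases h3 : a + 1 ≤ x <;>
    by_cases h4 : y ≤ b - 1 <;> by_cases h5 : x = a <;> by_cases h6 : y = b <;>
    simp only [h1, h2, h3, h4, h5, h6, and_true, true_and, and_false, false_and,
      if_true, if_false, and_self] <;>
    first
      | omega
      | (split_ifs <;> omega)

end OmegaAux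


open OmegaAux

/-- `Ω_D = Ω_{D'}` if and only if `D = D'`. -/
theorem omega_eq_iff (n : ℕ) (D D' : Finset (ℕ × ℕ))
    (hD : IsRP n D) (hD' : IsRP n D') :
    Omega n D = Omega n D' ↔ D = D' := by
  constructor
  · intro h
    -- `fD n D` lies in `Omega n D`, hence in `Omega n D'`.
    have hself : fD n D ∈ Omega n D := by
      refine ⟨1, isUnit_one, fun i j hij => ?_, ?_⟩
      · exact Matrix.one_apply_ne (fun hij' => by subst hij'; exact lt_irrefl _ hij)
      · have hlow : lowPart (fD n D) = fD n D := by
          ext r c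
          simp only [lowPart, Matrix.of_apply, fD]
          by_cases hm : ((r : ℕ) + 1, (c : ℕ) + 1) ∈ D
          · have hpp := mem_PhiPos.mp (hD.1 hm)
            have hlt : (c : ℕ) + 1 < (r : ℕ) + 1 := hpp.2.2.2.2
            have hcr : (c : ℕ) < (r : ℕ) := by omega
            simp [hm, hcr]
          · simp [hm]
        rw [coact, inv_one, Matrix.mul_one, Matrix.one_mul, hlow]
    rw [h] at hself
    obtain ⟨b, hbu, hbt, heq⟩ := hself
    -- All corner counts agree.
    have hN : ∀ i j : ℕ, j < i → Ncount i j D = Ncount i j D' := by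
      intro i j hij
      have hRPD : IsRP n (D.filter fun p => i ≤ p.1 ∧ p.2 ≤ j) :=
        ⟨fun p hp => hD.1 (Finset.mem_filter.mp hp).1,
         fun p hp q hq => hD.2 p (Finset.mem_filter.mp hp).1 q (Finset.mem_filter.mp hq).1⟩
      have hRPD' : IsRP n (D'.filter fun p => i ≤ p.1 ∧ p.2 ≤ j) :=
        ⟨fun p hp => hD'.1 (Finset.mem_filter.mp hp).1,
         fun p hp q hq => hD'.2 p (Finset.mem_filter.mp hp).1 q (Finset.mem_filter.mp hq).1⟩
      calc Ncount i j D = (fD n (D.filter fun p => i ≤ p.1 ∧ p.2 ≤ j)).rank :=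
            (rank_fD hRPD).symm
        _ = (Pmat n i * fD n D * Qmat n j).rank := by rw [corner_fD]
        _ = (Pmat n i * lowPart (b * fD n D' * b⁻¹) * Qmat n j).rank := by
            rw [show fD n D = lowPart (b * fD n D' * b⁻¹) from heq]
        _ = (Pmat n i * (b * fD n D' * b⁻¹) * Qmat n j).rank := by
            rw [corner_lowPart i j hij]
        _ = (Pmat n i * fD n D' * Qmat n j).rank := rank_corner_conj i j b _ hbu hbt
        _ = (fD n (D'.filter fun p => i ≤ p.1 ∧ p.2 ≤ j)).rank := by rw [corner_fD]
        _ = Ncount i j D' := rank_fD hRPD'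
    -- Conclude `D = D'` by inclusion–exclusion.
    ext p
    rcases p with ⟨a, b⟩
    have key : (a, b) ∈ PhiPos n → ((a, b) ∈ D ↔ (a, b) ∈ D') := by
      intro hp
      have hpp := mem_PhiPos.mp hp
      have hb : 1 ≤ b := hpp.2.2.1
      have hba : b < a := hpp.2.2.2.2
      have e1 := count_step D a b hb
      have e2 := count_step D' a b hb
      have c1 : Ncount a b D = Ncount a b D' := hN a b hba
      have c2 : Ncount (a + 1) (b - 1) D = Ncount (a + 1) (b - 1) D' :=
        hN (a + 1) (b - 1) (by omega)
      have c3 : Ncount (a + 1) b D = Ncount (a + 1) b D' := hN (a + 1) b (by omega)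
      have c4 : Ncount a (b - 1) D = Ncount a (b - 1) D' := hN a (b - 1) (by omega)
      constructor
      · intro hmem
        by_contra hd'
        rw [if_pos hmem] at e1
        rw [if_neg hd'] at e2
        omega
      · intro hmem
        by_contra hd
        rw [if_pos hmem] at e2
        rw [if_neg hd] at e1
        omega
    constructor
    · intro hmem
      exact (key (hD.1 hmem)).mp hmem
    · intro hmem
      exact (key (hD'.1 hmem)).mpr hmem
  · rintro rfl
    rfl
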